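/- In the bubbling calculus for the branch divisor: let $a \geq 1$, let $\gamma_1,\dots,\gamma_n \in \{1,\dots,a-1\}$ satisfy $\gamma_i + \gamma_j \leq a$ for all $i \neq j$, and let $\delta_1,\dots,\delta_m \in \{1,\dots,a\}$. Suppose $\sum_{i=1}^l \gamma_i - \sum_{j=1}^m \delta_j = ka$ for some integer $k$, with $m \geq 1$ and $l + m \geq 3$. Then $l + m - 2 - k > 0$. -/

import Mathlib

/-- The bubbling calculus inequality: with `1 ≤ γ_i ≤ a - 1` satisfying the
boundedness condition `γ_i + γ_j ≤ a` for `i ≠ j`, with `1 ≤ δ_j ≤ a`, and with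
`∑_{i ≤ l} γ_i - ∑_j δ_j = k a`, `m ≥ 1`, `l + m ≥ 3`, one has
`l + m - 2 - k > 0`. -/
theorem stmt7 (a n m l : ℕ) (ha : 1 ≤ a) (γ : Fin n → ℕ)
    (hγ : ∀ i, 1 ≤ γ i ∧ γ i ≤ a - 1)
    (hbound : ∀ i j, i ≠ j → γ i + γ j ≤ a)
    (δ : Fin m → ℕ) (hδ : ∀ j, 1 ≤ δ j ∧ δ j ≤ a)
    (hl : l ≤ n) (k : ℤ)
    (hk : (∑ i : Fin l, (γ (Fin.castLE hl i) : ℤ)) - ∑ j, (δ j : ℤ) = k * a)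
    (hm : 1 ≤ m) (hlm : 3 ≤ l + m) :
    0 < (l : ℤ) + m - 2 - k := by
  by_contra h
  push_neg at h
  -- so k ≥ l + m - 2
  have hk' : (l : ℤ) + m - 2 ≤ k := by linarith
  -- δ sum lower bound
  have hδsum : (m : ℤ) ≤ ∑ j, (δ j : ℤ) := by
    calc (m : ℤ) = ∑ _j : Fin m, (1 : ℤ) := by simp
    _ ≤ ∑ j, (δ j : ℤ) := Finset.sum_le_sum (fun j _ => by
        have := (hδ j).1; exact_mod_cast this)
  have hka : (k - ((l : ℤ) + m - 2)) * a ≥ 0 :=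
    mul_nonneg (by linarith) (by positivity)
  rcases le_or_gt l 1 with hl1 | hl2
  · -- l ≤ 1 : sum γ ≤ l * (a - 1)
    have hγsum : (∑ i : Fin l, (γ (Fin.castLE hl i) : ℤ)) ≤ l * ((a : ℤ) - 1) := by
      calc (∑ i : Fin l, (γ (Fin.castLE hl i) : ℤ))
          ≤ ∑ _i : Fin l, ((a : ℤ) - 1) := Finset.sum_le_sum (fun i _ => by
            have := (hγ (Fin.castLE hl i)).2; omega)
        _ = l * ((a : ℤ) - 1) := by simp [mul_comm]; ring
    have hm2 : (2 : ℤ) ≤ m := by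
      have : 2 ≤ m := by omega
      exact_mod_cast this
    have hl1' : (l : ℤ) ≤ 1 := by exact_mod_cast hl1
    have ha' : (1 : ℤ) ≤ a := by exact_mod_cast ha
    nlinarith [mul_nonneg (by linarith : (0:ℤ) ≤ (m:ℤ) - 2) (by linarith : (0:ℤ) ≤ (a:ℤ) - 1)]
  · -- l ≥ 2
    set i0 : Fin l := ⟨0, by omega⟩ with hi0
    set g : Fin l → ℤ := fun i => (γ (Fin.castLE hl i) : ℤ) with hg
    have hsplit : ∑ i, g i = g i0 + ∑ i ∈ Finset.univ.erase i0, g i :=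
      (Finset.add_sum_erase _ _ (Finset.mem_univ i0)).symm
    have hbd : ∀ i ∈ Finset.univ.erase i0, g i ≤ (a : ℤ) - g i0 := by
      intro i hi
      have hne : i ≠ i0 := (Finset.mem_erase.mp hi).1
      have hne' : Fin.castLE hl i ≠ Fin.castLE hl i0 :=
        fun hc => hne (Fin.castLE_injective hl hc)
      have := hbound (Fin.castLE hl i) (Fin.castLE hl i0) hne'
      simp only [hg]
      omega
    have hcard : (Finset.univ.erase i0).card = l - 1 := by
      simp [Finset.card_erase_of_mem]
    have hsum2 : ∑ i ∈ Finset.univ.erase i0, g i ≤ (l - 1 : ℤ) * ((a : ℤ) - g i0) := by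
      calc ∑ i ∈ Finset.univ.erase i0, g i
          ≤ ∑ _i ∈ Finset.univ.erase i0, ((a : ℤ) - g i0) := Finset.sum_le_sum hbd
        _ = (Finset.univ.erase i0).card * ((a : ℤ) - g i0) := by
            rw [Finset.sum_const, nsmul_eq_mul]
        _ = (l - 1 : ℤ) * ((a : ℤ) - g i0) := by
            rw [hcard]; congr 1; omega
    have hg0lb : (1 : ℤ) ≤ g i0 := by
      have := (hγ (Fin.castLE hl i0)).1
      simp only [hg]; exact_mod_cast this
    have hg0ub : g i0 ≤ (a : ℤ) - 1 := by
      have := (hγ (Fin.castLE hl i0)).2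
      simp only [hg]; omega
    have hl2' : (2 : ℤ) ≤ l := by exact_mod_cast hl2
    have hm' : (1 : ℤ) ≤ m := by exact_mod_cast hm
    have ha' : (1 : ℤ) ≤ a := by exact_mod_cast ha
    have hγsum : ∑ i, g i ≤ g i0 + (l - 1 : ℤ) * ((a : ℤ) - g i0) := by
      rw [hsplit]; linarith
    nlinarith [mul_nonneg (by linarith : (0:ℤ) ≤ (m:ℤ) - 1) (by linarith : (0:ℤ) ≤ (a:ℤ) - 1),
      mul_nonneg (by linarith : (0:ℤ) ≤ (l:ℤ) - 2) (by linarith : (0:ℤ) ≤ g i0 - 1)]
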